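/- Let ε > 0. For every real y ≥ 0, |h_ε(y)| ≤ 1/2, where h_ε(y) = y·(g_ε(y + 1) − g_ε(y)) + g_ε(y + 1) and g_ε(x) = (exp(−ε·x)/2)·(1 + ε·x/2). -/

import Mathlib

open Real

/-- `g_ε(x) = (exp(−ε·x)/2)·(1 + ε·x/2)`. -/
noncomputable def gFn (ε x : ℝ) : ℝ := Real.exp (-ε * x) / 2 * (1 + ε * x / 2)

/-- `h_ε(y) = y·(g_ε(y + 1) − g_ε(y)) + g_ε(y + 1)`. -/
noncomputable def hFn (ε y : ℝ) : ℝ :=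
  y * (gFn ε (y + 1) - gFn ε y) + gFn ε (y + 1)

lemma hasDerivAt_xg (ε x : ℝ) :
    HasDerivAt (fun t : ℝ => t * gFn ε t)
      (Real.exp (-ε * x) * (1 - (ε * x) ^ 2 / 2) / 2) x := by
  have h1 : HasDerivAt (fun t : ℝ => Real.exp (-ε * t)) (Real.exp (-ε * x) * (-ε)) x := by
    simpa using ((hasDerivAt_id x).const_mul (-ε)).exp
  have h2 : HasDerivAt (fun t : ℝ => 1 + ε * t / 2) (ε / 2) x := by
    simpa using (((hasDerivAt_id x).const_mul ε).div_const 2).const_add 1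
  have h3 : HasDerivAt (fun t : ℝ => gFn ε t)
      ((Real.exp (-ε * x) * (-ε)) / 2 * (1 + ε * x / 2)
        + Real.exp (-ε * x) / 2 * (ε / 2)) x := by
    exact (h1.div_const 2).mul h2
  have : HasDerivAt (fun t : ℝ => id t * gFn ε t) _ x := (hasDerivAt_id x).fun_mul h3
  convert this using 1
  · simp only [id]
  simp only [gFn, id]
  ring

lemma abs_deriv_le (u : ℝ) (hu : 0 ≤ u) :
    |Real.exp (-u) * (1 - u ^ 2 / 2) / 2| ≤ 1 / 2 := by
  have he : Real.exp (-u) ≤ 1 := Real.exp_le_one_iff.2 (by linarith)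
  have hep : 0 < Real.exp (-u) := Real.exp_pos _
  rw [abs_le]
  constructor
  · -- need -1/2 ≤ exp(-u)*(1-u²/2)/2, i.e. exp(-u)*(u²/2-1) ≤ 1, i.e. u²/2-1 ≤ exp u
    have h3 : 1 + u / 3 ≤ Real.exp (u / 3) := by linarith [Real.add_one_le_exp (u/3)]
    have hcube : Real.exp u = Real.exp (u / 3) ^ 3 := by
      rw [← Real.exp_nat_mul]; ring_nf
    have hkey : u ^ 2 / 2 - 1 ≤ Real.exp u := by
      rw [hcube]
      have hcb := pow_le_pow_left₀ (by linarith : (0:ℝ) ≤ 1 + u / 3) h3 3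
      nlinarith [hu, mul_nonneg hu (sq_nonneg (u - 3))]
    have hinv : Real.exp (-u) = (Real.exp u)⁻¹ := by rw [Real.exp_neg]
    have hup : 0 < Real.exp u := Real.exp_pos u
    rw [hinv]
    have hie : (Real.exp u)⁻¹ * Real.exp u = 1 := inv_mul_cancel₀ hup.ne'
    nlinarith [mul_le_mul_of_nonneg_left hkey (inv_pos.2 hup).le]
  · nlinarith

/-- For `y ≥ 0`, `|h_ε(y)| ≤ 1/2`. -/
theorem abs_hFn_le_half (ε : ℝ) (hε : 0 < ε) (y : ℝ) (hy : 0 ≤ y) :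
    |hFn ε y| ≤ 1 / 2 := by
  have hlt : y < y + 1 := by linarith
  obtain ⟨c, hc, hceq⟩ := exists_hasDerivAt_eq_slope (fun t : ℝ => t * gFn ε t)
    (fun x => Real.exp (-ε * x) * (1 - (ε * x) ^ 2 / 2) / 2) hlt
    (fun x _ => (hasDerivAt_xg ε x).continuousAt.continuousWithinAt)
    (fun x _ => hasDerivAt_xg ε x)
  have hh : hFn ε y = Real.exp (-ε * c) * (1 - (ε * c) ^ 2 / 2) / 2 := by
    rw [hceq]
    simp only [hFn]
    ring
  rw [hh]
  have hc0 : 0 ≤ ε * c := mul_nonneg hε.le (by linarith [hc.1])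
  have := abs_deriv_le (ε * c) hc0
  simpa using this
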